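/- Let G be a finite group and K = x^G a conjugacy class such that K² is a conjugacy class. Then K = x[x,G] and C_G(x) = C_G(x²), where [x,G] is the subgroup generated by commutators [x,g] for g ∈ G. -/

import Mathlib

open Pointwise

/-- The conjugacy class of `a` in `G`. -/
def conjClass (G : Type*) [Group G] (a : G) : Set G := {b | IsConj a b}

/-- The subgroup `[x,G]` generated by the commutators `[x,g] = x⁻¹ · x^g` for `g ∈ G`. -/
def commSub {G : Type*} [Group G] (x : G) : Subgroup G :=
  Subgroup.closure {z | ∃ g : G, z = x⁻¹ * (g⁻¹ * x * g)}

lemma ncard_conjClass {G : Type*} [Group G] (x : G) :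
    (conjClass G x).ncard = (Subgroup.centralizer {x}).index := by
  have horb : conjClass G x = MulAction.orbit (ConjAct G) x := by
    ext b
    rw [ConjAct.mem_orbit_conjAct]
    exact isConj_comm
  rw [horb, ← MulAction.index_stabilizer, Subgroup.centralizer_eq_comap_stabilizer]
  exact (Subgroup.index_comap_of_surjective (H := MulAction.stabilizer (ConjAct G) x)
    (f := ConjAct.toConjAct.toMonoidHom) (MulEquiv.surjective _)).symm

theorem stmt6 {G : Type*} [Group G] [Fintype G] (x : G)
    (h : ∃ d : G, (conjClass G x) ^ 2 = conjClass G d) :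
    conjClass G x = x • (commSub x : Set G) ∧
      Subgroup.centralizer {x} = Subgroup.centralizer {x ^ 2} := by
  classical
  set K : Set G := conjClass G x with hK
  -- x ∈ K
  have hxK : x ∈ K := IsConj.refl x
  -- K is closed under conjugation
  have hconjK : ∀ g k, k ∈ K → g * k * g⁻¹ ∈ K := by
    intro g k hk
    exact hk.trans (isConj_iff.mpr ⟨g, rfl⟩)
  -- K^2 = conjClass of x^2
  have hsq : K * K = conjClass G (x ^ 2) := by
    obtain ⟨d, hd⟩ := h
    rw [sq] at hd
    have hx2 : x ^ 2 ∈ conjClass G d := by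
      rw [← hd, sq]
      exact Set.mul_mem_mul hxK hxK
    rw [hd]
    ext b
    exact ⟨fun hb => (hx2.symm.trans hb), fun hb => hx2.trans hb⟩
  -- centralizer containment
  have hcent : Subgroup.centralizer {x} ≤ Subgroup.centralizer {x ^ 2} := by
    intro g hg
    rw [Subgroup.mem_centralizer_singleton_iff] at hg ⊢
    rw [sq, ← mul_assoc, hg, mul_assoc, hg, ← mul_assoc]
  -- x • K ⊆ conjClass (x^2)
  have hsmul_sub : x • K ⊆ conjClass G (x ^ 2) := by
    rintro _ ⟨k, hk, rfl⟩
    rw [← hsq]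
    exact Set.mul_mem_mul hxK hk
  -- cardinalities
  have hc1 : K.ncard = (Subgroup.centralizer {x}).index := ncard_conjClass x
  have hc2 : (conjClass G (x ^ 2)).ncard = (Subgroup.centralizer {x ^ 2}).index :=
    ncard_conjClass (x ^ 2)
  have hle1 : K.ncard ≤ (conjClass G (x ^ 2)).ncard := by
    rw [← Set.ncard_smul_set x K]
    exact Set.ncard_le_ncard hsmul_sub (Set.toFinite _)
  have hle2 : (conjClass G (x ^ 2)).ncard ≤ K.ncard := by
    rw [hc1, hc2]
    exact Subgroup.index_antitone hcent
  have hcard_eq : K.ncard = (conjClass G (x ^ 2)).ncard := le_antisymm hle1 hle2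
  -- x • K = conjClass (x^2) = K * K
  have hxKeq : x • K = K * K := by
    rw [hsq]
    apply Set.eq_of_subset_of_ncard_le hsmul_sub _ (Set.toFinite _)
    rw [Set.ncard_smul_set x K, hcard_eq]
  -- centralizer equality
  have hcent_eq : Subgroup.centralizer {x} = Subgroup.centralizer {x ^ 2} := by
    have hidx : (Subgroup.centralizer {x}).index = (Subgroup.centralizer {x ^ 2}).index := by
      rw [← hc1, ← hc2, hcard_eq]
    apply Subgroup.eq_of_le_of_card_ge hcent
    have h1 := Subgroup.card_mul_index (Subgroup.centralizer {x})
    have h2 := Subgroup.card_mul_index (Subgroup.centralizer {x ^ 2})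
    rw [hidx] at h1
    have hpos : (Subgroup.centralizer {x ^ 2}).index ≠ 0 :=
      Subgroup.FiniteIndex.index_ne_zero
    exact le_of_eq (Nat.eq_of_mul_eq_mul_right (Nat.pos_of_ne_zero hpos) (h2.trans h1.symm))
  refine ⟨?_, hcent_eq⟩
  -- the set S of commutators
  set S : Set G := {z | ∃ g : G, z = x⁻¹ * (g⁻¹ * x * g)} with hS
  have hmemS : ∀ s, s ∈ S ↔ x * s ∈ K := by
    intro s
    constructor
    · rintro ⟨g, rfl⟩
      have he : x * (x⁻¹ * (g⁻¹ * x * g)) = g⁻¹ * x * g := by group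
      rw [he]
      exact isConj_iff.mpr ⟨g⁻¹, by group⟩
    · intro hs
      obtain ⟨c, hc⟩ := isConj_iff.mp hs
      exact ⟨c⁻¹, by rw [inv_inv, hc]; group⟩
  -- S is closed under multiplication
  have hmul : ∀ s ∈ S, ∀ t ∈ S, s * t ∈ S := by
    intro s hs t ht
    rw [hmemS] at hs ht ⊢
    -- x * (s * t) = x⁻¹ * ((x * (x*s) * x⁻¹) * (x*t))
    have hk3 : x * (x * s) * x⁻¹ ∈ K := hconjK x _ hs
    have hprod : (x * (x * s) * x⁻¹) * (x * t) ∈ x • K := by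
      rw [hxKeq]
      exact Set.mul_mem_mul hk3 ht
    obtain ⟨k, hk, hkeq⟩ := hprod
    have : x * (s * t) = k := by
      have := hkeq
      simp only [smul_eq_mul] at this
      have h' : x * (x * s) * x⁻¹ * (x * t) = x * (x * (s * t)) := by group
      rw [h'] at this
      exact (mul_left_cancel this).symm
    rw [this]; exact hk
  have hone : (1 : G) ∈ S := by rw [hmemS]; simpa using hxK
  have hpow : ∀ (s : G), s ∈ S → ∀ n : ℕ, s ^ n ∈ S := by
    intro s hs n
    induction n with
    | zero => simpa using hone
    | succ n ih => rw [pow_succ]; exact hmul _ ih _ hs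
  have hinv : ∀ s ∈ S, s⁻¹ ∈ S := by
    intro s hs
    have hord : orderOf s ≠ 0 := (orderOf_pos s).ne'
    have : s⁻¹ = s ^ (orderOf s - 1) := by
      apply inv_eq_of_mul_eq_one_left
      rw [← pow_succ, Nat.sub_add_cancel (Nat.pos_of_ne_zero hord), pow_orderOf_eq_one]
    rw [this]
    exact hpow s hs _
  -- S is a subgroup, hence closure S = S
  set H : Subgroup G :=
    { carrier := S
      mul_mem' := fun ha hb => hmul _ ha _ hb
      one_mem' := hone
      inv_mem' := fun ha => hinv _ ha } with hHdef
  have hclosure : (commSub x : Set G) = S := by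
    have : commSub x = H := by
      rw [commSub]
      exact Subgroup.closure_eq H
    rw [this]; rfl
  rw [hclosure]
  -- K = x • S
  ext b
  rw [Set.mem_smul_set_iff_inv_smul_mem, smul_eq_mul, hmemS, mul_inv_cancel_left]
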